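/- Let S be a consistent queryless schedule. Then: N^min_O(S) = (N^min_I(S) − {n | ∃(m,l,n) ∈ DEL(S)}) ∪ {n | ∃(m,l,n) ∈ ADD(S)}; N^max_O(S) = (N^max_I(S) − {n | ∃(m,l,n) ∈ DEL(S)}) ∪ {n | ∃(m,l,n) ∈ ADD(S)}; E^min_O(S) = (E^min_I(S) − DEL(S)) ∪ ADD(S); and E^max_O(S) = (E^max_I(S) − DEL(S)) ∪ ADD(S). -/

import Mathlib

attribute [local instance] Classical.propDecidable

/-! ## Data model: nodes, labels, edges, document trees -/

abbrev Node := ℕ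
abbrev Label := ℕ
abbrev Edge := Node × Label × Node

/-- A candidate document tree: a finite node set, a finite edge set, a root. -/
structure Tree3 where
  N : Finset Node
  E : Finset Edge
  root : Node

/-- The edge-step relation of a set of labelled edges. -/
def estep (E : Set Edge) (a b : Node) : Prop := ∃ l : Label, (a, l, b) ∈ E

/-- `T` is a document tree: the root is a node, edges connect nodes, every node has at
most one incoming edge, the root has none, and every node is reachable from the root
(edges are directed from parent to child). -/
def IsDT (T : Tree3) : Prop :=
  T.root ∈ T.N ∧
  (∀ e ∈ T.E, e.1 ∈ T.N ∧ e.2.2 ∈ T.N) ∧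
  (∀ e ∈ T.E, ∀ e' ∈ T.E, e.2.2 = e'.2.2 → e = e') ∧
  (∀ e ∈ T.E, e.2.2 ≠ T.root) ∧
  (∀ n ∈ T.N, Relation.ReflTransGen (estep (↑T.E)) T.root n)

/-! ## Update operations and queryless schedules -/

inductive Op where
  | add : Node → Label → Node → Op
  | del : Node → Label → Node → Op
deriving DecidableEq

/-- Apply an update operation to a tree; `none` when the operation is undefined. -/
noncomputable def applyOp (o : Op) (T : Tree3) : Option Tree3 :=
  match o with
  | Op.add m l n =>
      let T' : Tree3 := ⟨insert n T.N, insert (m, l, n) T.E, T.root⟩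
      if (m, l, n) ∈ T.E ∨ ¬ IsDT T' then none else some T'
  | Op.del m l n =>
      let T' : Tree3 := ⟨T.N.erase n, T.E.erase (m, l, n), T.root⟩
      if (m, l, n) ∉ T.E ∨ ¬ IsDT T' then none else some T'

/-- An action is an operation tagged with a transaction identifier. -/
abbrev QLAction := Op × ℕ

/-- A queryless (QL) schedule is a finite sequence of actions. -/
abbrev QLSchedule := List QLAction

/-- Apply a QL schedule to a tree, operation by operation. -/
noncomputable def applyQL : QLSchedule → Tree3 → Option Tree3
  | [], T => some T
  | a :: rest, T => (applyOp a.1 T).bind (applyQL rest)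

/-- `S[T]` is defined (and `T` is a document tree). -/
def DefinedOn (S : QLSchedule) (T : Tree3) : Prop := IsDT T ∧ (applyQL S T).isSome

/-- A QL schedule is consistent iff it is defined on at least one document tree. -/
def ConsistentQL (S : QLSchedule) : Prop := ∃ T, DefinedOn S T

def Op.src : Op → Node
  | Op.add m _ _ => m
  | Op.del m _ _ => m

def Op.tgt : Op → Node
  | Op.add _ _ n => n
  | Op.del _ _ n => n

def Op.edge : Op → Edge
  | Op.add m l n => (m, l, n)
  | Op.del m l n => (m, l, n)

/-- The list of operations of a QL schedule. -/
def ops (S : QLSchedule) : List Op := S.map Prod.fst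

/-- The operation containing the first occurrence of the node `x` in `S`, if any. -/
def firstNodeOp (S : QLSchedule) (x : Node) : Option Op :=
  (ops S).find? (fun o => (o.src == x) || (o.tgt == x))

/-- The operation containing the last occurrence of the node `x` in `S`, if any. -/
def lastNodeOp (S : QLSchedule) (x : Node) : Option Op :=
  (ops S).reverse.find? (fun o => (o.src == x) || (o.tgt == x))

/-- The operation containing the first occurrence of the edge `e` in `S`, if any. -/
def firstEdgeOp (S : QLSchedule) (e : Edge) : Option Op :=
  (ops S).find? (fun o => o.edge == e)

/-- The operation containing the last occurrence of the edge `e` in `S`, if any. -/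
def lastEdgeOp (S : QLSchedule) (e : Edge) : Option Op :=
  (ops S).reverse.find? (fun o => o.edge == e)

/-- Some edge with target `x` occurs in `S`. -/
def occursTgt (S : QLSchedule) (x : Node) : Prop := ∃ o ∈ ops S, o.tgt = x

/-- `N^min_I(S)`. -/
def NminI (S : QLSchedule) : Set Node :=
  {x | ∃ l n, firstNodeOp S x = some (Op.add x l n)} ∪
  {x | ∃ l n, firstNodeOp S x = some (Op.del x l n)} ∪
  {x | ∃ m l, firstNodeOp S x = some (Op.del m l x)}

/-- `N^max_I(S)`. -/
def NmaxI (S : QLSchedule) : Set Node :=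
  {x | ¬ ∃ m l, firstNodeOp S x = some (Op.add m l x)}

/-- `E^min_I(S)`. -/
def EminI (S : QLSchedule) : Set Edge :=
  {e | firstEdgeOp S e = some (Op.del e.1 e.2.1 e.2.2)}

/-- `E^max_I(S)`. -/
def EmaxI (S : QLSchedule) : Set Edge :=
  EminI S ∪ {e | ¬ occursTgt S e.1 ∧ ¬ occursTgt S e.2.2}

/-- `N^min_O(S)`. -/
def NminO (S : QLSchedule) : Set Node :=
  {x | ∃ l n, lastNodeOp S x = some (Op.del x l n)} ∪
  {x | ∃ l n, lastNodeOp S x = some (Op.add x l n)} ∪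
  {x | ∃ m l, lastNodeOp S x = some (Op.add m l x)}

/-- `N^max_O(S)`. -/
def NmaxO (S : QLSchedule) : Set Node :=
  {x | ¬ ∃ m l, lastNodeOp S x = some (Op.del m l x)}

/-- `E^min_O(S)`. -/
def EminO (S : QLSchedule) : Set Edge :=
  {e | lastEdgeOp S e = some (Op.add e.1 e.2.1 e.2.2)}

/-- `E^max_O(S)`. -/
def EmaxO (S : QLSchedule) : Set Edge :=
  EminO S ∪ {e | ¬ occursTgt S e.1 ∧ ¬ occursTgt S e.2.2}

/-- `ADD(S)`: edges whose last occurrence in `S` is an addition. -/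
def ADDs (S : QLSchedule) : Set Edge :=
  {e | lastEdgeOp S e = some (Op.add e.1 e.2.1 e.2.2)}

/-- `DEL(S)`: edges whose last occurrence in `S` is a deletion. -/
def DELs (S : QLSchedule) : Set Edge :=
  {e | lastEdgeOp S e = some (Op.del e.1 e.2.1 e.2.2)}

/-- `T` is a basic input tree of `S`. -/
def BasicInput (S : QLSchedule) (T : Tree3) : Prop :=
  IsDT T ∧ NminI S ⊆ ↑T.N ∧ ↑T.N ⊆ NmaxI S ∧ EminI S ⊆ ↑T.E ∧ ↑T.E ⊆ EmaxI S

/-- `T` is a basic output tree of `S`. -/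
def BasicOutput (S : QLSchedule) (T : Tree3) : Prop :=
  IsDT T ∧ NminO S ⊆ ↑T.N ∧ ↑T.N ⊆ NmaxO S ∧ EminO S ⊆ ↑T.E ∧ ↑T.E ⊆ EmaxO S

/-- The C-condition (nine clauses). -/
def CCond (S : QLSchedule) : Prop :=
  (∀ i j (n l₁ n₁ n₂ l₂ : ℕ), i < j →
      (ops S)[i]? = some (Op.add n l₁ n₁) → (ops S)[j]? = some (Op.add n₂ l₂ n) →
      ∃ k : ℕ, i < k ∧ k < j ∧ (ops S)[k]? = some (Op.del n l₁ n₁)) ∧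
  (∀ i j (n₁ l₁ n n₂ l₂ : ℕ), i < j →
      (ops S)[i]? = some (Op.add n₁ l₁ n) → (ops S)[j]? = some (Op.add n₂ l₂ n) →
      ∃ k : ℕ, i < k ∧ k < j ∧ (ops S)[k]? = some (Op.del n₁ l₁ n)) ∧
  (∀ i j (n l₁ n₁ n₂ l₂ : ℕ), i < j →
      (ops S)[i]? = some (Op.add n l₁ n₁) → (ops S)[j]? = some (Op.del n₂ l₂ n) →
      ∃ k : ℕ, i < k ∧ k < j ∧ (ops S)[k]? = some (Op.del n l₁ n₁)) ∧
  (∀ i j (n₁ l₁ n l₂ n₂ : ℕ), i < j →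
      (ops S)[i]? = some (Op.add n₁ l₁ n) → (ops S)[j]? = some (Op.del n l₂ n₂) →
      ∃ k : ℕ, i < k ∧ k < j ∧ (ops S)[k]? = some (Op.add n l₂ n₂)) ∧
  (∀ i j (n₁ l₁ n n₂ l₂ : ℕ), i < j → (n₁, l₁) ≠ (n₂, l₂) →
      (ops S)[i]? = some (Op.add n₁ l₁ n) → (ops S)[j]? = some (Op.del n₂ l₂ n) →
      ∃ k : ℕ, i < k ∧ k < j ∧ (ops S)[k]? = some (Op.del n₁ l₁ n)) ∧
  (∀ i j (n l₁ n₁ n₂ l₂ : ℕ), i < j →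
      (ops S)[i]? = some (Op.del n l₁ n₁) → (ops S)[j]? = some (Op.add n₂ l₂ n) →
      ∃ k : ℕ, ∃ n₃ l₃ : ℕ, i < k ∧ k < j ∧ (ops S)[k]? = some (Op.del n₃ l₃ n)) ∧
  (∀ i j (n₁ l₁ n l₂ n₂ : ℕ), i < j →
      (ops S)[i]? = some (Op.del n₁ l₁ n) → (ops S)[j]? = some (Op.add n l₂ n₂) →
      ∃ k : ℕ, ∃ n₃ l₃ : ℕ, i < k ∧ k < j ∧ (ops S)[k]? = some (Op.add n₃ l₃ n)) ∧
  (∀ i j (n₁ l₁ n l₂ n₂ : ℕ), i < j →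
      (ops S)[i]? = some (Op.del n₁ l₁ n) → (ops S)[j]? = some (Op.del n l₂ n₂) →
      ∃ k : ℕ, ∃ n₃ l₃ : ℕ, i < k ∧ k < j ∧ (ops S)[k]? = some (Op.add n₃ l₃ n)) ∧
  (∀ i j (n₁ l₁ n n₂ l₂ : ℕ), i < j →
      (ops S)[i]? = some (Op.del n₁ l₁ n) → (ops S)[j]? = some (Op.del n₂ l₂ n) →
      ∃ k : ℕ, i < k ∧ k < j ∧ (ops S)[k]? = some (Op.add n₂ l₂ n))

/-! ## Transactions, equivalence and serializability of QL schedules -/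

/-- Two QL schedules are interleavings of the same set of transactions: for every
transaction identifier, the subsequences of actions with that identifier coincide. -/
def SameTrans (S S' : QLSchedule) : Prop :=
  ∀ t : ℕ, S.filter (fun a => a.2 == t) = S'.filter (fun a => a.2 == t)

/-- A schedule is serial iff the actions of each transaction occur consecutively. -/
def Serial (S : QLSchedule) : Prop :=
  ∀ i j k : ℕ, i ≤ j → j ≤ k →
    ∀ a b c : QLAction, S[i]? = some a → S[j]? = some b → S[k]? = some c →
      a.2 = c.2 → b.2 = a.2

/-- Two QL schedules are equivalent: they are defined on the same non-empty set of
document trees and produce the same output tree on each of them. -/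
def EquivQL (S S' : QLSchedule) : Prop :=
  (∃ T, DefinedOn S T) ∧ ∀ T, IsDT T → applyQL S T = applyQL S' T

/-- A QL schedule is serializable iff it is equivalent to a serial schedule over the
same set of transactions. -/
def SerializableQL (S : QLSchedule) : Prop :=
  ∃ S', Serial S' ∧ SameTrans S S' ∧ EquivQL S S'

/-! ## Paths and forests -/

/-- `SPath G m lp n`: there is a directed path from `m` to `n` in the edge set `G`
whose label path is `lp`. -/
inductive SPath (G : Set Edge) : Node → List Label → Node → Prop where
  | nil (n : Node) : SPath G n [] n
  | cons {m n n' : Node} {l : Label} {lp : List Label} :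
      (m, l, n) ∈ G → SPath G n lp n' → SPath G m (l :: lp) n'

/-- A set of edges is a forest: no two distinct edges share a target, and
there is no (non-trivial) directed cycle. -/
def IsForest (G : Set Edge) : Prop :=
  (∀ e ∈ G, ∀ e' ∈ G, e.2.2 = e'.2.2 → e = e') ∧
  ¬ ∃ (n : Node) (lp : List Label), lp ≠ [] ∧ SPath G n lp n

/-! ## Path expressions -/

inductive Step where
  | star : Step
  | lab : Label → Step
deriving DecidableEq

/-- Path expressions: `ε`, `pe/f` and `pe//f` (a single step `f` is `ε/f`). -/
inductive PathExpr where
  | eps : PathExpr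
  | child : PathExpr → Step → PathExpr
  | desc : PathExpr → Step → PathExpr
deriving DecidableEq

def Step.mtch : Step → Label → Prop
  | Step.star, _ => True
  | Step.lab l, l' => l = l'

def Step.mtchB : Step → Label → Bool
  | Step.star, _ => true
  | Step.lab l, l' => l == l'

/-- The set `L(pe)` of label paths represented by a path expression
(a label path is a list of labels). -/
def PathExpr.lang : PathExpr → Set (List Label)
  | PathExpr.eps => {[]}
  | PathExpr.child pe f => {w | ∃ u l, u ∈ pe.lang ∧ f.mtch l ∧ w = u ++ [l]}
  | PathExpr.desc pe f => {w | ∃ u v l, u ∈ pe.lang ∧ f.mtch l ∧ w = u ++ v ++ [l]}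

/-- `SOP` on a *reversed* label path. -/
def SOPr : PathExpr → List Label → Set PathExpr
  | pe, [] => {pe}
  | PathExpr.eps, _ :: _ => ∅
  | PathExpr.child pe f, l :: lp => if f.mtchB l then SOPr pe lp else ∅
  | PathExpr.desc pe f, l :: lp =>
      if f.mtchB l then SOPr pe lp ∪ SOPr (PathExpr.desc pe Step.star) lp else ∅
termination_by pe lp => lp.length

/-- `SOP(pe)_lp`: the set of non-empty `lp`-prefixes of `pe`. -/
def SOP (pe : PathExpr) (lp : List Label) : Set PathExpr := SOPr pe lp.reverse

/-- `L(SOP(pe)_lp)`. -/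
def LSOP (pe : PathExpr) (lp : List Label) : Set (List Label) :=
  ⋃ pe' ∈ SOP pe lp, pe'.lang

/-- `pe/lp`: append a label path to a path expression with `/` separators. -/
def PathExpr.appendLP : PathExpr → List Label → PathExpr
  | pe, [] => pe
  | pe, l :: lp => PathExpr.appendLP (PathExpr.child pe (Step.lab l)) lp

/-- The prefixes of a path expression (including `ε`). -/
def PathExpr.prefixes : PathExpr → Set PathExpr
  | PathExpr.eps => {PathExpr.eps}
  | PathExpr.child pe f => insert (PathExpr.child pe f) pe.prefixes
  | PathExpr.desc pe f => insert (PathExpr.desc pe f) pe.prefixes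

/-! ## Schedules with queries -/

inductive GOp where
  | query : Node → PathExpr → GOp
  | add : Node → Label → Node → GOp
  | del : Node → Label → Node → GOp

abbrev GAction := GOp × ℕ

/-- A (general) schedule is a finite sequence of query/add/del actions. -/
abbrev Schedule := List GAction

def GOp.toOp? : GOp → Option Op
  | GOp.query _ _ => none
  | GOp.add m l n => some (Op.add m l n)
  | GOp.del m l n => some (Op.del m l n)

/-- The QL schedule of a schedule: remove all query actions. -/
def qlOf (S : Schedule) : QLSchedule :=
  S.filterMap (fun a => (a.1.toOp?).map (fun o => (o, a.2)))

/-- The answer of `query(n,pe)` on a tree `T`. -/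
def queryAnswer (n : Node) (pe : PathExpr) (T : Tree3) : Set Node :=
  {n' | n' ∈ T.N ∧ ∃ lp, SPath (↑T.E) n lp n' ∧ lp ∈ pe.lang}

/-- A schedule is consistent iff its QL schedule is. -/
def ConsistentSched (S : Schedule) : Prop := ConsistentQL (qlOf S)

/-- Run a schedule on a tree: the final tree together with, for each query (in order),
its transaction identifier and its answer; `none` if some update is undefined. -/
noncomputable def runQ : Schedule → Tree3 → Option (Tree3 × List (ℕ × Set Node))
  | [], T => some (T, [])
  | (GOp.query n pe, t) :: rest, T =>
      (runQ rest T).map (fun p => (p.1, (t, queryAnswer n pe T) :: p.2))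
  | (GOp.add m l n, _) :: rest, T =>
      (applyOp (Op.add m l n) T).bind (runQ rest)
  | (GOp.del m l n, _) :: rest, T =>
      (applyOp (Op.del m l n) T).bind (runQ rest)

/-- Two schedules are equivalent: defined on the same non-empty set of document trees,
and on each such tree they produce the same output tree and, per transaction, the same
sequence of query answers. -/
def EquivSched (S₁ S₂ : Schedule) : Prop :=
  (∃ T, IsDT T ∧ (runQ S₁ T).isSome) ∧
  ∀ T, IsDT T →
    ((runQ S₁ T).isSome ↔ (runQ S₂ T).isSome) ∧
    ∀ p₁ p₂, runQ S₁ T = some p₁ → runQ S₂ T = some p₂ →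
      p₁.1 = p₂.1 ∧
      ∀ t : ℕ, (p₁.2.filter (fun x => x.1 == t)).map Prod.snd
             = (p₂.2.filter (fun x => x.1 == t)).map Prod.snd

/-- Two schedules are interleavings of the same set of transactions. -/
def SameTransG (S S' : Schedule) : Prop :=
  ∀ t : ℕ, S.filter (fun a => a.2 == t) = S'.filter (fun a => a.2 == t)

/-- A schedule is serial iff the actions of each transaction occur consecutively. -/
def SerialG (S : Schedule) : Prop :=
  ∀ i j k : ℕ, i ≤ j → j ≤ k →
    ∀ a b c : GAction, S[i]? = some a → S[j]? = some b → S[k]? = some c →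
      a.2 = c.2 → b.2 = a.2

/-- A schedule is serializable iff it is equivalent to a serial schedule over the same
set of transactions. -/
def SerializableSched (S : Schedule) : Prop :=
  ∃ S', SerialG S' ∧ SameTransG S S' ∧ EquivSched S S'

/-- `E^min(S^Q)` where `Q` is the action at position `i` of `S`. -/
def EminSQ (S : Schedule) (i : ℕ) : Set Edge :=
  (EminI (qlOf S) \ DELs (qlOf (S.take i))) ∪ ADDs (qlOf (S.take i))

/-- `E^max(S^Q)` where `Q` is the action at position `i` of `S`. -/
def EmaxSQ (S : Schedule) (i : ℕ) : Set Edge :=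
  (EmaxI (qlOf S) \ DELs (qlOf (S.take i))) ∪ ADDs (qlOf (S.take i))

/-- `x` is a non-building-node of `S`: some `add(m,l,x)` or `del(m,l,x)` occurs in `S`. -/
def NonBuilding (S : Schedule) (x : Node) : Prop :=
  ∃ a ∈ S, ∃ m l, a.1 = GOp.add m l x ∨ a.1 = GOp.del m l x

/-- `x` is a node of the graph (edge set) `G`. -/
def NodeOfGraph (G : Set Edge) (x : Node) : Prop := ∃ e ∈ G, e.1 = x ∨ e.2.2 = x

/-- `x` has a parent in the edge set `G`. -/
def HasParent (G : Set Edge) (x : Node) : Prop := ∃ e ∈ G, e.2.2 = x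

/-- `PQRN(S,Q)` for the query `Q = query(n,pe)` at position `i` of `S`:
the nodes `m` of the graph `E^min(S^Q)` that are non-building-nodes, whose root
ancestor `r` in the forest `E^min(S^Q)` (the node with no parent from which `m` is
reachable, via the label path `ALabel(S^Q,m)`) is a building-node different from `n`,
and such that `L(SOP(pe)_{ALabel(S^Q,m)}) ≠ ∅`. -/
def PQRN (S : Schedule) (i : ℕ) (n : Node) (pe : PathExpr) : Set Node :=
  {m | NodeOfGraph (EminSQ S i) m ∧ NonBuilding S m ∧
       ∃ r lp, SPath (EminSQ S i) r lp m ∧ ¬ HasParent (EminSQ S i) r ∧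
         ¬ NonBuilding S r ∧ r ≠ n ∧ LSOP pe lp ≠ ∅}

/-- The answer of the query at position `i` of `S` when `S` is applied to `T`
(the query is evaluated on the tree obtained by applying the actions before it). -/
noncomputable def answerAt (S : Schedule) (i : ℕ) (T : Tree3) : Option (Set Node) :=
  match S[i]? with
  | some (GOp.query n pe, _) => (applyQL (qlOf (S.take i)) T).map (queryAnswer n pe)
  | _ => none

namespace Stmt4

/-- The last operation in `S` whose target is `x`. -/
def lastTgtOp (S : QLSchedule) (x : Node) : Option Op :=
  (ops S).reverse.find? (fun o => o.tgt == x)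

lemma ops_cons (a : QLAction) (S : QLSchedule) : ops (a :: S) = a.1 :: ops S := rfl

lemma applyQL_cons (a : QLAction) (S : QLSchedule) (T : Tree3) :
    applyQL (a :: S) T = (applyOp a.1 T).bind (applyQL S) := rfl

lemma find?_strengthen {α : Type*} {p q : α → Bool} {l : List α} {a : α}
    (h : l.find? q = some a) (hpa : p a = true) (hpq : ∀ b, p b = true → q b = true) :
    l.find? p = some a := by
  induction l with
  | nil => simp at h
  | cons b l ih =>
    by_cases hq : q b = true
    · rw [List.find?_cons_of_pos hq] at h
      rw [Option.some.injEq] at h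
      subst h
      rw [List.find?_cons_of_pos hpa]
    · rw [List.find?_cons_of_neg hq] at h
      rw [List.find?_cons_of_neg (fun hp => hq (hpq _ hp))]
      exact ih h

lemma find?_isSome_weaken {α : Type*} {p q : α → Bool} {l : List α} {a : α}
    (h : l.find? p = some a) (hpq : ∀ b, p b = true → q b = true) :
    ∃ c, l.find? q = some c :=
  Option.isSome_iff_exists.mp (List.find?_isSome.mpr
    ⟨a, List.mem_of_find?_eq_some h, hpq a (List.find?_some h)⟩)

lemma some_or' {α : Type*} (a : α) (o : Option α) : (some a).or o = some a := rfl

lemma none_or' {α : Type*} (o : Option α) : (none : Option α).or o = o := rfl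

lemma edge_tgt (o : Op) : o.edge.2.2 = o.tgt := by cases o <;> rfl

lemma edge_shape {o : Op} {m l n : ℕ} (h : o.edge = (m, l, n)) :
    o = Op.add m l n ∨ o = Op.del m l n := by
  cases o with
  | add a b c => simp [Op.edge] at h; obtain ⟨rfl, rfl, rfl⟩ := h; left; rfl
  | del a b c => simp [Op.edge] at h; obtain ⟨rfl, rfl, rfl⟩ := h; right; rfl

lemma applyOp_add_some {m l n : Node} {T T' : Tree3}
    (h : applyOp (Op.add m l n) T = some T') :
    T' = ⟨insert n T.N, insert (m, l, n) T.E, T.root⟩ ∧ (m, l, n) ∉ T.E ∧ IsDT T' := by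
  simp only [applyOp] at h
  by_cases hc : (m, l, n) ∈ T.E ∨ ¬ IsDT (⟨insert n T.N, insert (m, l, n) T.E, T.root⟩ : Tree3)
  · rw [if_pos hc] at h; exact nomatch h
  · rw [if_neg hc] at h
    push_neg at hc
    rw [Option.some.injEq] at h
    subst h
    exact ⟨rfl, hc.1, hc.2⟩

lemma applyOp_del_some {m l n : Node} {T T' : Tree3}
    (h : applyOp (Op.del m l n) T = some T') :
    T' = ⟨T.N.erase n, T.E.erase (m, l, n), T.root⟩ ∧ (m, l, n) ∈ T.E ∧ IsDT T' := by
  simp only [applyOp] at h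
  by_cases hc : (m, l, n) ∉ T.E ∨ ¬ IsDT (⟨T.N.erase n, T.E.erase (m, l, n), T.root⟩ : Tree3)
  · rw [if_pos hc] at h; exact nomatch h
  · rw [if_neg hc] at h
    push_neg at hc
    rw [Option.some.injEq] at h
    subst h
    exact ⟨rfl, hc.1, hc.2⟩

lemma applyOp_isDT {o : Op} {T T' : Tree3} (h : applyOp o T = some T') : IsDT T' := by
  cases o with
  | add m l n => exact (applyOp_add_some h).2.2
  | del m l n => exact (applyOp_del_some h).2.2

lemma no_self_loop {T : Tree3} (hT : IsDT T) (x : Node) (l : Label) :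
    (x, l, x) ∉ T.E := by
  intro hmem
  obtain ⟨hroot, hends, huniq, hnr, hreach⟩ := hT
  have hxN : x ∈ T.N := (hends _ hmem).2
  have key : ∀ z, Relation.ReflTransGen (estep (↑T.E)) T.root z → z ≠ x := by
    intro z hz
    induction hz with
    | refl =>
      intro hzx
      exact hnr _ hmem (by simpa using hzx.symm)
    | @tail b c hab hbc ih =>
      intro hcx
      obtain ⟨l', hl'⟩ := hbc
      rw [hcx] at hl'
      have hbx : (b, l', x) = (x, l, x) :=
        huniq _ (Finset.mem_coe.mp hl') _ hmem rfl
      exact ih (congrArg Prod.fst hbx)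
  exact key x (hreach x hxN) rfl

lemma run_no_selfop {S : QLSchedule} :
    ∀ {T T' : Tree3}, IsDT T → applyQL S T = some T' → ∀ o ∈ ops S, o.src ≠ o.tgt := by
  induction S with
  | nil => intro T T' _ _ o ho; simp [ops] at ho
  | cons a S ih =>
    intro T T' hT hrun o ho
    obtain ⟨oa, ta⟩ := a
    rw [applyQL_cons, Option.bind_eq_some_iff] at hrun
    obtain ⟨T₁, h1, h2⟩ := hrun
    rw [ops_cons, List.mem_cons] at ho
    rcases ho with rfl | ho
    · cases o with
      | add m l n =>
        intro hst
        simp only [Op.src, Op.tgt] at hst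
        subst hst
        obtain ⟨hTe, _, hdt⟩ := applyOp_add_some h1
        exact no_self_loop hdt m l (by rw [hTe]; exact Finset.mem_insert_self _ _)
      | del m l n =>
        intro hst
        simp only [Op.src, Op.tgt] at hst
        subst hst
        obtain ⟨_, hmem, _⟩ := applyOp_del_some h1
        exact no_self_loop hT m l hmem
    · exact ih (applyOp_isDT h1) h2 o ho

lemma run_absent_no_src {S : QLSchedule} :
    ∀ {T T' : Tree3}, IsDT T → applyQL S T = some T' → ∀ x, x ∉ T.N →
      (∀ o ∈ ops S, o.tgt ≠ x) → ∀ o ∈ ops S, o.src ≠ x := by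
  induction S with
  | nil => intro T T' _ _ x _ _ o ho; simp [ops] at ho
  | cons a S ih =>
    intro T T' hT hrun x hxN htgt o ho
    obtain ⟨oa, ta⟩ := a
    rw [applyQL_cons, Option.bind_eq_some_iff] at hrun
    obtain ⟨T₁, h1, h2⟩ := hrun
    have htgt_a : oa.tgt ≠ x := htgt oa (by rw [ops_cons]; exact List.mem_cons_self)
    have htgt_S : ∀ o ∈ ops S, o.tgt ≠ x := fun o ho =>
      htgt o (by rw [ops_cons]; exact List.mem_cons_of_mem _ ho)
    have hxN₁ : x ∉ T₁.N := by
      cases oa with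
      | add m l n =>
        obtain ⟨hTe, _, _⟩ := applyOp_add_some h1
        rw [hTe]
        intro hx
        rcases Finset.mem_insert.mp hx with rfl | hx
        · exact htgt_a rfl
        · exact hxN hx
      | del m l n =>
        obtain ⟨hTe, _, _⟩ := applyOp_del_some h1
        rw [hTe]
        exact fun hx => hxN (Finset.mem_of_mem_erase hx)
    rw [ops_cons, List.mem_cons] at ho
    rcases ho with rfl | ho
    · cases o with
      | add m l n =>
        intro hsrc
        simp only [Op.src] at hsrc
        subst hsrc
        obtain ⟨hTe, _, hdt⟩ := applyOp_add_some h1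
        have hedge : (m, l, n) ∈ T₁.E := by rw [hTe]; exact Finset.mem_insert_self _ _
        have hmN : m ∈ T₁.N := (hdt.2.1 _ hedge).1
        rw [hTe] at hmN
        rcases Finset.mem_insert.mp hmN with rfl | hm
        · exact htgt_a rfl
        · exact hxN hm
      | del m l n =>
        intro hsrc
        simp only [Op.src] at hsrc
        subst hsrc
        obtain ⟨_, hmem, _⟩ := applyOp_del_some h1
        exact hxN (hT.2.1 _ hmem).1
    · exact ih (applyOp_isDT h1) h2 x hxN₁ htgt_S o ho

lemma find?_single {α : Type*} (p : α → Bool) (b : α) :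
    List.find? p [b] = if p b then some b else none := by
  by_cases h : p b = true
  · rw [List.find?_cons_of_pos h, if_pos h]
  · rw [List.find?_cons_of_neg h, if_neg h]; rfl

lemma lastNodeOp_cons (a : QLAction) (S : QLSchedule) (x : Node) :
    lastNodeOp (a :: S) x = (lastNodeOp S x).or
      (if (a.1.src == x) || (a.1.tgt == x) then some a.1 else none) := by
  rw [lastNodeOp, ops_cons, List.reverse_cons, List.find?_append, find?_single]; rfl

lemma lastTgtOp_cons (a : QLAction) (S : QLSchedule) (x : Node) :
    lastTgtOp (a :: S) x = (lastTgtOp S x).or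
      (if a.1.tgt == x then some a.1 else none) := by
  rw [lastTgtOp, ops_cons, List.reverse_cons, List.find?_append, find?_single]; rfl

lemma lastEdgeOp_cons (a : QLAction) (S : QLSchedule) (e : Edge) :
    lastEdgeOp (a :: S) e = (lastEdgeOp S e).or
      (if a.1.edge == e then some a.1 else none) := by
  rw [lastEdgeOp, ops_cons, List.reverse_cons, List.find?_append, find?_single]; rfl

lemma lastTgtOp_eq_none {S : QLSchedule} {x : Node} :
    lastTgtOp S x = none ↔ ∀ o ∈ ops S, o.tgt ≠ x := by
  simp [lastTgtOp, List.find?_eq_none, List.mem_reverse]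

lemma lastNodeOp_eq_none {S : QLSchedule} {x : Node} :
    lastNodeOp S x = none ↔ ∀ o ∈ ops S, o.src ≠ x ∧ o.tgt ≠ x := by
  simp [lastNodeOp, List.find?_eq_none, List.mem_reverse, not_or]

lemma firstNodeOp_eq_none {S : QLSchedule} {x : Node} :
    firstNodeOp S x = none ↔ ∀ o ∈ ops S, o.src ≠ x ∧ o.tgt ≠ x := by
  simp [firstNodeOp, List.find?_eq_none, not_or]

lemma lastNodeOp_some {S : QLSchedule} {x : Node} {o : Op}
    (h : lastNodeOp S x = some o) : o ∈ ops S ∧ (o.src = x ∨ o.tgt = x) :=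
  ⟨List.mem_reverse.mp (List.mem_of_find?_eq_some h), by simpa using List.find?_some h⟩

lemma firstNodeOp_some {S : QLSchedule} {x : Node} {o : Op}
    (h : firstNodeOp S x = some o) : o ∈ ops S ∧ (o.src = x ∨ o.tgt = x) :=
  ⟨List.mem_of_find?_eq_some h, by simpa using List.find?_some h⟩

lemma lastEdgeOp_some {S : QLSchedule} {e : Edge} {o : Op}
    (h : lastEdgeOp S e = some o) : o ∈ ops S ∧ o.edge = e :=
  ⟨List.mem_reverse.mp (List.mem_of_find?_eq_some h), by simpa using List.find?_some h⟩

lemma firstEdgeOp_some {S : QLSchedule} {e : Edge} {o : Op}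
    (h : firstEdgeOp S e = some o) : o ∈ ops S ∧ o.edge = e :=
  ⟨List.mem_of_find?_eq_some h, by simpa using List.find?_some h⟩

/-- If the last operation targeting `x` is a deletion of `x`, it is also the last
operation mentioning `x` at all (in a schedule defined on a document tree). -/
lemma lastNode_of_lastTgt_del {S : QLSchedule} :
    ∀ {T T' : Tree3}, IsDT T → applyQL S T = some T' →
      ∀ {x m l : ℕ}, lastTgtOp S x = some (Op.del m l x) →
        lastNodeOp S x = some (Op.del m l x) := by
  induction S with
  | nil => intro T T' _ _ x m l h; simp [lastTgtOp, ops] at h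
  | cons a S ih =>
    intro T T' hT hrun x m l h
    obtain ⟨oa, ta⟩ := a
    rw [applyQL_cons, Option.bind_eq_some_iff] at hrun
    obtain ⟨T₁, h1, h2⟩ := hrun
    rw [lastTgtOp_cons] at h
    rw [lastNodeOp_cons]
    cases hS : lastTgtOp S x with
    | some o₂ =>
      rw [hS, some_or'] at h
      rw [Option.some.injEq] at h
      subst h
      rw [ih (applyOp_isDT h1) h2 hS, some_or']
    | none =>
      rw [hS, none_or'] at h
      have hpa : (oa.tgt == x) = true := by
        by_contra hc
        rw [if_neg hc] at h
        exact nomatch h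
      rw [if_pos hpa, Option.some.injEq] at h
      subst h
      -- S contains no operation mentioning x
      have hnt : ∀ o ∈ ops S, o.tgt ≠ x := lastTgtOp_eq_none.mp hS
      have hxN₁ : x ∉ T₁.N := by
        obtain ⟨hTe, _, _⟩ := applyOp_del_some h1
        rw [hTe]
        exact fun hx => (Finset.mem_erase.mp hx).1 rfl
      have hns : ∀ o ∈ ops S, o.src ≠ x :=
        run_absent_no_src (applyOp_isDT h1) h2 x hxN₁ hnt
      have hnone : lastNodeOp S x = none :=
        lastNodeOp_eq_none.mpr (fun o ho => ⟨hns o ho, hnt o ho⟩)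
      rw [hnone, none_or',
        if_pos (show (((Op.del m l x).src == x) || ((Op.del m l x).tgt == x)) = true by
          simp [Op.src, Op.tgt])]

/-- If the last operation mentioning `x` is a deletion of `x` (as a target), then no
edge into `x` can be "still present at the end": its last occurrence cannot be an
addition, nor can it be initially present and untouched. -/
lemma no_later_add {S : QLSchedule} :
    ∀ {T T' : Tree3}, IsDT T → applyQL S T = some T' →
      ∀ {x m l m' l' : ℕ}, lastNodeOp S x = some (Op.del m l x) →
        (((m', l', x) ∈ T.E ∧ lastEdgeOp S (m', l', x) = none) ∨
          lastEdgeOp S (m', l', x) = some (Op.add m' l' x)) → False := by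
  induction S with
  | nil => intro T T' _ _ x m l m' l' h _; simp [lastNodeOp, ops] at h
  | cons a S ih =>
    intro T T' hT hrun x m l m' l' hnode hedge
    obtain ⟨oa, ta⟩ := a
    rw [applyQL_cons, Option.bind_eq_some_iff] at hrun
    obtain ⟨T₁, h1, h2⟩ := hrun
    have hT₁ : IsDT T₁ := applyOp_isDT h1
    rw [lastNodeOp_cons] at hnode
    rw [lastEdgeOp_cons] at hedge
    cases hS : lastNodeOp S x with
    | some o₂ =>
      rw [hS, some_or', Option.some.injEq] at hnode
      subst hnode
      cases hE : lastEdgeOp S (m', l', x) with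
      | some o₃ =>
        rw [hE, some_or'] at hedge
        rcases hedge with ⟨_, hcon⟩ | hadd
        · exact nomatch hcon
        · rw [Option.some.injEq] at hadd
          subst hadd
          exact ih hT₁ h2 hS (Or.inr hE)
      | none =>
        rw [hE, none_or'] at hedge
        rcases hedge with ⟨hmem, hcnone⟩ | hadd
        · -- the if is none, so oa.edge ≠ (m',l',x); edge survives the step
          have hne : (oa.edge == ((m', l', x) : Edge)) ≠ true := by
            intro hc
            rw [if_pos hc] at hcnone
            exact nomatch hcnone
          have hne' : oa.edge ≠ (m', l', x) := by
            intro hc; exact hne (by simp [hc])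
          have hmem₁ : (m', l', x) ∈ T₁.E := by
            cases oa with
            | add m₂ l₂ n₂ =>
              obtain ⟨hTe, _, _⟩ := applyOp_add_some h1
              rw [hTe]; exact Finset.mem_insert_of_mem hmem
            | del m₂ l₂ n₂ =>
              obtain ⟨hTe, _, _⟩ := applyOp_del_some h1
              rw [hTe]
              exact Finset.mem_erase.mpr ⟨fun hc => hne' (by simp [Op.edge, hc]), hmem⟩
          exact ih hT₁ h2 hS (Or.inl ⟨hmem₁, hE⟩)
        · -- the if is some (add m' l' x), so oa = add m' l' x
          have hpa : (oa.edge == ((m', l', x) : Edge)) = true := by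
            by_contra hc
            rw [if_neg hc] at hadd
            exact nomatch hadd
          rw [if_pos hpa, Option.some.injEq] at hadd
          subst hadd
          obtain ⟨hTe, _, _⟩ := applyOp_add_some h1
          have hmem₁ : (m', l', x) ∈ T₁.E := by
            rw [hTe]; exact Finset.mem_insert_self _ _
          exact ih hT₁ h2 hS (Or.inl ⟨hmem₁, hE⟩)
    | none =>
      rw [hS, none_or'] at hnode
      have hpa : ((oa.src == x) || (oa.tgt == x)) = true := by
        by_contra hc
        rw [if_neg hc] at hnode
        exact nomatch hnode
      rw [if_pos hpa, Option.some.injEq] at hnode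
      subst hnode
      -- no operation in S mentions x, so no edge op on (m',l',x) in S
      have hnomention := lastNodeOp_eq_none.mp hS
      have hEnone : lastEdgeOp S (m', l', x) = none := by
        rw [lastEdgeOp, List.find?_eq_none]
        intro o ho
        simp only [beq_iff_eq]
        intro hc
        have : o.tgt = x := by rw [← edge_tgt, hc]
        exact (hnomention o (List.mem_reverse.mp ho)).2 this
      rw [hEnone, none_or'] at hedge
      obtain ⟨hTe, hmemdel, hdt₁⟩ := applyOp_del_some h1
      rcases hedge with ⟨hmem, hcnone⟩ | hadd
      · have hne : ((m : ℕ), l, x) ≠ (m', l', x) := by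
          intro hc
          rw [if_pos (by simp [Op.edge, hc])] at hcnone
          exact nomatch hcnone
        have hmem₁ : (m', l', x) ∈ T₁.E := by
          rw [hTe]
          exact Finset.mem_erase.mpr ⟨fun hc => hne hc.symm, hmem⟩
        have hxN : (x : ℕ) ∈ T₁.N := (hdt₁.2.1 _ hmem₁).2
        rw [hTe] at hxN
        exact (Finset.mem_erase.mp hxN).1 rfl
      · -- if gives some (del m l x) or none, never an add
        by_cases hc : ((Op.del m l x).edge == ((m', l', x) : Edge)) = true
        · rw [if_pos hc, Option.some.injEq] at hadd
          simp at hadd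
        · rw [if_neg hc] at hadd
          exact nomatch hadd

lemma DELs_occursTgt {S : QLSchedule} {e : Edge} (h : e ∈ DELs S) :
    occursTgt S e.2.2 := by
  have h' : lastEdgeOp S e = some (Op.del e.1 e.2.1 e.2.2) := h
  obtain ⟨hmem, _⟩ := lastEdgeOp_some h'
  exact ⟨_, hmem, rfl⟩

lemma EminI_diff_DELs_subset (S : QLSchedule) : EminI S \ DELs S ⊆ ADDs S := by
  intro e ⟨he, hd⟩
  have he' : firstEdgeOp S e = some (Op.del e.1 e.2.1 e.2.2) := he
  obtain ⟨hmem, _⟩ := firstEdgeOp_some he'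
  have : ∃ o, lastEdgeOp S e = some o :=
    Option.isSome_iff_exists.mp (List.find?_isSome.mpr
      ⟨Op.del e.1 e.2.1 e.2.2, List.mem_reverse.mpr hmem, by simp [Op.edge]⟩)
  obtain ⟨o, ho⟩ := this
  obtain ⟨_, hoe⟩ := lastEdgeOp_some ho
  rcases edge_shape (show o.edge = (e.1, e.2.1, e.2.2) by rw [hoe]) with rfl | rfl
  · exact ho
  · exact absurd (show e ∈ DELs S from ho) hd

end Stmt4

/-- Relations between the basic input and output sets of a consistent
QL schedule via its addition and deletion sets. -/
theorem output_sets_from_input_sets (S : QLSchedule) (h : ConsistentQL S) :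
    NminO S = (NminI S \ {n : Node | ∃ m l, (m, l, n) ∈ DELs S}) ∪
              {n : Node | ∃ m l, (m, l, n) ∈ ADDs S} ∧
    NmaxO S = (NmaxI S \ {n : Node | ∃ m l, (m, l, n) ∈ DELs S}) ∪
              {n : Node | ∃ m l, (m, l, n) ∈ ADDs S} ∧
    EminO S = (EminI S \ DELs S) ∪ ADDs S ∧
    EmaxO S = (EmaxI S \ DELs S) ∪ ADDs S := by
  obtain ⟨T, hT, hdef⟩ := h
  obtain ⟨T', hrun⟩ := Option.isSome_iff_exists.mp hdef
  have hF0 : ∀ o ∈ ops S, o.src ≠ o.tgt := Stmt4.run_no_selfop hT hrun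
  have key : ∀ x : Node,
      (x ∈ NminO S ↔ x ∈ (NminI S \ {n : Node | ∃ m l, (m, l, n) ∈ DELs S}) ∪
          {n : Node | ∃ m l, (m, l, n) ∈ ADDs S}) ∧
      (x ∈ NmaxO S ↔ x ∈ (NmaxI S \ {n : Node | ∃ m l, (m, l, n) ∈ DELs S}) ∪
          {n : Node | ∃ m l, (m, l, n) ∈ ADDs S}) := by
    intro x
    cases hlast : lastNodeOp S x with
    | none =>
      have hnoop : ∀ o ∈ ops S, o.src ≠ x ∧ o.tgt ≠ x := Stmt4.lastNodeOp_eq_none.mp hlast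
      have hfn : firstNodeOp S x = none :=
        Stmt4.firstNodeOp_eq_none.mpr hnoop
      have hND : ¬ ∃ m l : ℕ, (m, l, x) ∈ DELs S := by
        rintro ⟨m, l, hd⟩
        have hd' : lastEdgeOp S (m, l, x) = some (Op.del m l x) := hd
        obtain ⟨hmem, _⟩ := Stmt4.lastEdgeOp_some hd'
        exact (hnoop _ hmem).2 rfl
      have hNA : ¬ ∃ m l : ℕ, (m, l, x) ∈ ADDs S := by
        rintro ⟨m, l, ha⟩
        have ha' : lastEdgeOp S (m, l, x) = some (Op.add m l x) := ha
        obtain ⟨hmem, _⟩ := Stmt4.lastEdgeOp_some ha'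
        exact (hnoop _ hmem).2 rfl
      have l1 : x ∉ NminO S := by simp [NminO, hlast]
      have r1 : x ∉ (NminI S \ {n : Node | ∃ m l, (m, l, n) ∈ DELs S}) ∪
          {n : Node | ∃ m l, (m, l, n) ∈ ADDs S} := by
        rintro (⟨hmi, _⟩ | hA)
        · exact absurd hmi (by simp [NminI, hfn])
        · exact hNA hA
      refine ⟨iff_of_false l1 r1, iff_of_true (by simp [NmaxO, hlast]) ?_⟩
      exact Or.inl ⟨by simp [NmaxI, hfn], hND⟩
    | some o =>
      obtain ⟨homem, hopred⟩ := Stmt4.lastNodeOp_some hlast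
      have hself := hF0 o homem
      obtain ⟨o₀, hfirst⟩ : ∃ o₀, firstNodeOp S x = some o₀ :=
        Option.isSome_iff_exists.mp (List.find?_isSome.mpr
          ⟨o, homem, by rcases hopred with h' | h' <;> simp [h']⟩)
      obtain ⟨ho₀mem, ho₀pred⟩ := Stmt4.firstNodeOp_some hfirst
      have hself₀ := hF0 o₀ ho₀mem
      have hNminO : x ∈ NminO S ↔ ¬ ∃ m l : ℕ, o = Op.del m l x := by
        simp only [NminO, Set.mem_union, Set.mem_setOf_eq, hlast, Option.some.injEq]
        constructor
        · rintro ((⟨l₁, n₁, h1⟩ | ⟨l₁, n₁, h1⟩) | ⟨m₁, l₁, h1⟩) ⟨m₂, l₂, h2⟩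
          · rw [h1] at h2
            obtain ⟨rfl, rfl, rfl⟩ : x = m₂ ∧ l₁ = l₂ ∧ n₁ = x := by simpa using h2
            exact hself (by rw [h1]; rfl)
          · rw [h1] at h2; simp at h2
          · rw [h1] at h2; simp at h2
        · intro hnd
          rcases hopred with hsrc | htgt
          · cases o with
            | add m1 l1 n1 =>
              obtain rfl : m1 = x := hsrc
              exact Or.inl (Or.inr ⟨l1, n1, rfl⟩)
            | del m1 l1 n1 =>
              obtain rfl : m1 = x := hsrc
              exact Or.inl (Or.inl ⟨l1, n1, rfl⟩)
          · cases o with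
            | add m1 l1 n1 =>
              obtain rfl : n1 = x := htgt
              exact Or.inr ⟨m1, l1, rfl⟩
            | del m1 l1 n1 =>
              obtain rfl : n1 = x := htgt
              exact absurd ⟨m1, l1, rfl⟩ hnd
      have hNmaxO : x ∈ NmaxO S ↔ ¬ ∃ m l : ℕ, o = Op.del m l x := by
        unfold NmaxO
        rw [Set.mem_setOf_eq]
        simp only [hlast, Option.some.injEq]
      have hNminI : x ∈ NminI S ↔ ¬ ∃ m l : ℕ, o₀ = Op.add m l x := by
        simp only [NminI, Set.mem_union, Set.mem_setOf_eq, hfirst, Option.some.injEq]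
        constructor
        · rintro ((⟨l₁, n₁, h1⟩ | ⟨l₁, n₁, h1⟩) | ⟨m₁, l₁, h1⟩) ⟨m₂, l₂, h2⟩
          · rw [h1] at h2
            obtain ⟨rfl, rfl, rfl⟩ : x = m₂ ∧ l₁ = l₂ ∧ n₁ = x := by simpa using h2
            exact hself₀ (by rw [h1]; rfl)
          · rw [h1] at h2; simp at h2
          · rw [h1] at h2; simp at h2
        · intro hnd
          rcases ho₀pred with hsrc | htgt
          · cases o₀ with
            | add m1 l1 n1 =>
              obtain rfl : m1 = x := hsrc
              exact Or.inl (Or.inl ⟨l1, n1, rfl⟩)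
            | del m1 l1 n1 =>
              obtain rfl : m1 = x := hsrc
              exact Or.inl (Or.inr ⟨l1, n1, rfl⟩)
          · cases o₀ with
            | add m1 l1 n1 =>
              obtain rfl : n1 = x := htgt
              exact absurd ⟨m1, l1, rfl⟩ hnd
            | del m1 l1 n1 =>
              obtain rfl : n1 = x := htgt
              exact Or.inr ⟨m1, l1, rfl⟩
      have hNmaxI : x ∈ NmaxI S ↔ ¬ ∃ m l : ℕ, o₀ = Op.add m l x := by
        unfold NmaxI
        rw [Set.mem_setOf_eq]
        simp only [hfirst, Option.some.injEq]
      have htgtop_of : ∀ o₂ ∈ ops S, o₂.tgt = x →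
          (∃ m l : ℕ, (m, l, x) ∈ ADDs S) ∨ ∃ m l : ℕ, o = Op.del m l x := by
        intro o₂ hmem htgt
        obtain ⟨o₃, h₃⟩ : ∃ o₃, Stmt4.lastTgtOp S x = some o₃ :=
          Option.isSome_iff_exists.mp (List.find?_isSome.mpr
            ⟨o₂, List.mem_reverse.mpr hmem, by simp [htgt]⟩)
        have h₃tgt : o₃.tgt = x := by simpa using List.find?_some h₃
        cases o₃ with
        | add m₃ l₃ n₃ =>
          have hn3 : n₃ = x := h₃tgt
          rw [hn3] at h₃
          left
          refine ⟨m₃, l₃, ?_⟩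
          show lastEdgeOp S (m₃, l₃, x) = some (Op.add m₃ l₃ x)
          refine Stmt4.find?_strengthen h₃ (by simp [Op.edge]) ?_
          intro b hb
          have hbe : b.edge = (m₃, l₃, x) := by simpa using hb
          simp only [beq_iff_eq]
          rw [← Stmt4.edge_tgt, hbe]
        | del m₃ l₃ n₃ =>
          have hn3 : n₃ = x := h₃tgt
          rw [hn3] at h₃
          right
          have hthis := Stmt4.lastNode_of_lastTgt_del hT hrun h₃
          have ho := hlast.symm.trans hthis
          rw [Option.some.injEq] at ho
          exact ⟨m₃, l₃, ho⟩
      have hDel_of_Pdel : (∃ m l : ℕ, o = Op.del m l x) →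
          ∃ m l : ℕ, (m, l, x) ∈ DELs S := by
        rintro ⟨m, l, hdel⟩
        refine ⟨m, l, ?_⟩
        show lastEdgeOp S (m, l, x) = some (Op.del m l x)
        rw [hdel] at hlast
        refine Stmt4.find?_strengthen hlast (by simp [Op.edge]) ?_
        intro b hb
        have hbe : b.edge = (m, l, x) := by simpa using hb
        have hbt : b.tgt = x := by rw [← Stmt4.edge_tgt, hbe]
        simp [hbt]
      have hcen : (¬ ∃ m l : ℕ, o = Op.del m l x) ↔
          (((¬ ∃ m l : ℕ, o₀ = Op.add m l x) ∧ ¬ ∃ m l : ℕ, (m, l, x) ∈ DELs S) ∨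
            ∃ m l : ℕ, (m, l, x) ∈ ADDs S) := by
        constructor
        · intro hnd
          by_cases hA : ∃ m l : ℕ, (m, l, x) ∈ ADDs S
          · exact Or.inr hA
          refine Or.inl ⟨?_, ?_⟩
          · rintro ⟨m, l, h0⟩
            have htgt0 : o₀.tgt = x := by rw [h0]; rfl
            rcases htgtop_of o₀ ho₀mem htgt0 with hA' | hPdel
            · exact hA hA'
            · exact hnd hPdel
          · rintro ⟨m, l, hd⟩
            have hd' : lastEdgeOp S (m, l, x) = some (Op.del m l x) := hd
            obtain ⟨hmem, _⟩ := Stmt4.lastEdgeOp_some hd'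
            rcases htgtop_of _ hmem rfl with hA' | hPdel
            · exact hA hA'
            · exact hnd hPdel
        · rintro (⟨hna, hnD⟩ | ⟨m', l', hA⟩) hPdel
          · exact hnD (hDel_of_Pdel hPdel)
          · obtain ⟨m, l, hdel⟩ := hPdel
            rw [hdel] at hlast
            have hA' : lastEdgeOp S (m', l', x) = some (Op.add m' l' x) := hA
            exact Stmt4.no_later_add hT hrun hlast (Or.inr hA')
      constructor
      · rw [Set.mem_union, Set.mem_diff, Set.mem_setOf_eq, Set.mem_setOf_eq,
          hNminO, hcen, hNminI]
      · rw [Set.mem_union, Set.mem_diff, Set.mem_setOf_eq, Set.mem_setOf_eq,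
          hNmaxO, hcen, hNmaxI]
  refine ⟨Set.ext fun x => (key x).1, Set.ext fun x => (key x).2, ?_, ?_⟩
  · exact (Set.union_eq_self_of_subset_left (Stmt4.EminI_diff_DELs_subset S)).symm
  · ext e
    simp only [EmaxO, EmaxI, Set.mem_union, Set.mem_diff, Set.mem_setOf_eq]
    constructor
    · rintro (hadd | hx)
      · exact Or.inr hadd
      · exact Or.inl ⟨Or.inr hx, fun hd => hx.2 (Stmt4.DELs_occursTgt hd)⟩
    · rintro (⟨hemaxI, hnd⟩ | hadd)
      · rcases hemaxI with hmin | hx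
        · exact Or.inl (Stmt4.EminI_diff_DELs_subset S ⟨hmin, hnd⟩)
        · exact Or.inr hx
      · exact Or.inl hadd
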